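/- For independent truncated-exponential random variables t₁,…,t_r each with density exp(ν − t)·1{t ≥ ν}, and constants γ ≥ 1, ρ > 0 with ν ≤ γ/ρ, the probability θ_{r,k} that t_j ≥ γ(1/ρ + Σ_{i=j+1}^r t_i) holds simultaneously for all j = 1,…,k equals exp(rν − (r−k)ν(1+γ)^k − (γ/ρ)·Σ_{i=1}^k (1+γ)^{i−1}) / (1+γ)^{r(k) } where the denominator exponent is r·k − k(k+1)/2, i.e. θ_{r,k} = exp(rν − (r−k)ν·(1+γ)^k − ρ^{−1}((1+γ)^k − 1)) · (1+γ)^{−(rk − k(k+1)/2)}. -/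

import Mathlib

open MeasureTheory Real Set ENNReal Filter

noncomputable def truncExp (ν : ℝ) : Measure ℝ :=
  volume.withDensity (fun t => ENNReal.ofReal (if ν ≤ t then Real.exp (ν - t) else 0))

-- real integral helper
lemma exp_int_Ioi (a b L : ℝ) (hb : 0 < b) :
    ∫ x in Ioi L, Real.exp (a - b * x) = Real.exp (a - b * L) / b := by
  have hderiv : ∀ x ∈ Ici L, HasDerivAt (fun x => -Real.exp (a - b * x) / b)
      (Real.exp (a - b * x)) x := by
    intro x _
    have h : HasDerivAt (fun x => a - b * x) (-b) x := by
      exact (((hasDerivAt_id x).const_mul b).const_sub a).congr_deriv (by ring)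
    have := (h.exp).neg.div_const b
    exact this.congr_deriv (by rw [div_eq_iff hb.ne']; ring)
  have hint : IntegrableOn (fun x => Real.exp (a - b * x)) (Ioi L) := by
    have := (exp_neg_integrableOn_Ioi L hb).const_mul (Real.exp a)
    refine this.congr (ae_of_all _ (fun x => ?_))
    simp [← Real.exp_add]; ring_nf
  have htend : Tendsto (fun x => -Real.exp (a - b * x) / b) atTop (nhds 0) := by
    have h1 : Tendsto (fun x : ℝ => a - b * x) atTop atBot := by
      apply tendsto_atBot_add_const_left
      exact (tendsto_neg_atBot_iff.mpr (tendsto_id.const_mul_atTop hb))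
    have := (Real.tendsto_exp_atBot.comp h1).neg.div_const b
    simpa using this
  have := integral_Ioi_of_hasDerivAt_of_tendsto' hderiv hint htend
  rw [this]; field_simp; ring

lemma dens_meas (ν : ℝ) : Measurable (fun t => ENNReal.ofReal (if ν ≤ t then Real.exp (ν - t) else 0)) := by
  apply ENNReal.measurable_ofReal.comp
  exact Measurable.ite measurableSet_Ici (by fun_prop) measurable_const

lemma trunc_lint (ν : ℝ) {f : ℝ → ℝ≥0∞} (hf : Measurable f) :
    ∫⁻ t, f t ∂(truncExp ν) = ∫⁻ t, ENNReal.ofReal (if ν ≤ t then Real.exp (ν - t) else 0) * f t := by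
  rw [truncExp, lintegral_withDensity_eq_lintegral_mul _ (dens_meas ν) hf]
  rfl

lemma inner_int (ν : ℝ) (c L : ℝ) (hc : 0 ≤ c) (hL : ν ≤ L) :
    ∫⁻ x, (if L ≤ x then ENNReal.ofReal (Real.exp (-(c * x))) else 0) ∂(truncExp ν)
      = ENNReal.ofReal (Real.exp (ν - (1 + c) * L) / (1 + c)) := by
  have hmeas : Measurable (fun x : ℝ => if L ≤ x then ENNReal.ofReal (Real.exp (-(c * x))) else 0) :=
    Measurable.ite measurableSet_Ici (by fun_prop) measurable_const
  rw [trunc_lint ν hmeas]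
  have heq : ∀ x : ℝ, ENNReal.ofReal (if ν ≤ x then Real.exp (ν - x) else 0) *
      (if L ≤ x then ENNReal.ofReal (Real.exp (-(c * x))) else 0)
      = ENNReal.ofReal ((Ici L).indicator (fun x => Real.exp (ν - (1 + c) * x)) x)
      := by
    intro x
    by_cases hx : L ≤ x
    · rw [if_pos hx, if_pos (le_trans hL hx), indicator_of_mem (mem_Ici.mpr hx),
        ← ENNReal.ofReal_mul (Real.exp_nonneg _), ← Real.exp_add]
      ring_nf
    · rw [if_neg hx, mul_zero, indicator_of_notMem (by simpa using hx), ENNReal.ofReal_zero]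
  simp only [heq]
  have hc1 : (0:ℝ) < 1 + c := by linarith
  have hint : IntegrableOn (fun x => Real.exp (ν - (1 + c) * x)) (Ici L) := by
    rw [integrableOn_Ici_iff_integrableOn_Ioi]
    have := (exp_neg_integrableOn_Ioi L hc1).const_mul (Real.exp ν)
    refine this.congr (ae_of_all _ (fun x => ?_))
    simp [← Real.exp_add]; ring_nf
  rw [← ofReal_integral_eq_lintegral_ofReal]
  · rw [integral_indicator measurableSet_Ici, integral_Ici_eq_integral_Ioi,
      exp_int_Ioi ν (1+c) L hc1]
  · rw [integrable_indicator_iff measurableSet_Ici]; exact hint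
  · exact ae_of_all _ (fun x => indicator_nonneg (fun y _ => Real.exp_nonneg _) x)

instance truncExp_prob (ν : ℝ) : IsProbabilityMeasure (truncExp ν) := by
  constructor
  have h := inner_int ν 0 ν le_rfl le_rfl
  simp only [zero_mul, neg_zero, Real.exp_zero, ENNReal.ofReal_one] at h
  have h2 : ∫⁻ x, (if ν ≤ x then (1:ℝ≥0∞) else 0) ∂(truncExp ν) = 1 := by rw [h]; norm_num
  calc (truncExp ν) univ
      = ∫⁻ x, ENNReal.ofReal (if ν ≤ x then Real.exp (ν - x) else 0) ∂volume := by
        rw [truncExp, withDensity_apply _ MeasurableSet.univ, Measure.restrict_univ]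
    _ = ∫⁻ x, ENNReal.ofReal (if ν ≤ x then Real.exp (ν - x) else 0)
          * (if ν ≤ x then (1:ℝ≥0∞) else 0) ∂volume :=
        lintegral_congr (fun x => by by_cases hx : ν ≤ x <;> simp [hx])
    _ = 1 := by
        rw [← trunc_lint ν (Measurable.ite measurableSet_Ici measurable_const measurable_const), h2]

lemma truncExp_Iio (ν : ℝ) : truncExp ν (Iio ν) = 0 := by
  rw [truncExp, withDensity_apply _ measurableSet_Iio]
  rw [setLIntegral_congr_fun measurableSet_Iio
    (fun x (hx : x < ν) => by simp [not_le.mpr hx] : ∀ x ∈ Iio ν, ENNReal.ofReal (if ν ≤ x then Real.exp (ν - x) else 0) = 0)]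
  simp

lemma ae_pi_ge (ν : ℝ) (n : ℕ) :
    ∀ᵐ t ∂(Measure.pi (fun _ : Fin n => truncExp ν)), ∀ i, ν ≤ t i := by
  rw [ae_all_iff]
  intro i
  rw [Filter.eventually_iff, mem_ae_iff]
  have hset : {t : Fin n → ℝ | ν ≤ t i}ᶜ = Function.eval i ⁻¹' (Iio ν) := by
    ext t; simp [not_le, Function.eval]
  rw [hset]
  exact Measure.pi_eval_preimage_null (μ := fun _ : Fin n => truncExp ν) (truncExp_Iio ν)

lemma ae_trunc_ge (ν : ℝ) : ∀ᵐ x ∂(truncExp ν), ν ≤ x := by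
  rw [Filter.eventually_iff, mem_ae_iff]
  have : {x : ℝ | ν ≤ x}ᶜ = Iio ν := by ext x; simp [not_le]
  rw [this]; exact truncExp_Iio ν

def Efun (γ ρ : ℝ) (n k : ℕ) : Set (Fin n → ℝ) :=
  {t | ∀ j : Fin n, (j : ℕ) < k → t j ≥ γ * (ρ⁻¹ + ∑ i : Fin n, if j < i then t i else 0)}

lemma sum_if_meas (n : ℕ) (j : Fin n) :
    Measurable (fun t : Fin n → ℝ => ∑ i : Fin n, if j < i then t i else 0) := by
  apply Finset.measurable_sum
  intro i _
  by_cases h : j < i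
  · simpa [h] using measurable_pi_apply i
  · simpa [h] using measurable_const

lemma Emeas (γ ρ : ℝ) (n k : ℕ) : MeasurableSet (Efun γ ρ n k) := by
  have : Efun γ ρ n k = ⋂ j : Fin n,
      {t : Fin n → ℝ | (j : ℕ) < k → γ * (ρ⁻¹ + ∑ i : Fin n, if j < i then t i else 0) ≤ t j} := by
    ext t; simp [Efun, ge_iff_le]
  rw [this]
  apply MeasurableSet.iInter
  intro j
  by_cases hj : (j : ℕ) < k
  · simp only [hj, true_implies]
    exact measurableSet_le (((sum_if_meas n j).const_add ρ⁻¹).const_mul γ)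
      (measurable_pi_apply j)
  · simp [hj]

noncomputable def Jfun (ν γ ρ : ℝ) (n k : ℕ) (c : ℝ) : ℝ≥0∞ :=
  ∫⁻ t, (Efun γ ρ n k).indicator
      (fun t => ENNReal.ofReal (Real.exp (-(c * ∑ i : Fin n, t i)))) t
    ∂(Measure.pi (fun _ : Fin n => truncExp ν))

lemma Fmeas (γ ρ : ℝ) (n k : ℕ) (c : ℝ) :
    Measurable ((Efun γ ρ n k).indicator
      (fun t => ENNReal.ofReal (Real.exp (-(c * ∑ i : Fin n, t i))))) := by
  apply Measurable.indicator _ (Emeas γ ρ n k)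
  apply ENNReal.measurable_ofReal.comp
  apply Real.measurable_exp.comp
  apply Measurable.neg
  apply Measurable.const_mul
  exact Finset.measurable_sum _ (fun i _ => measurable_pi_apply i)

lemma Jpeel (ν γ ρ : ℝ) (n k : ℕ) (c : ℝ) :
    Jfun ν γ ρ (n+1) k c =
      ∫⁻ y, (∫⁻ x, (Efun γ ρ (n+1) k).indicator
          (fun t => ENNReal.ofReal (Real.exp (-(c * ∑ i : Fin (n+1), t i))))
          (Fin.insertNth 0 x y) ∂(truncExp ν))
        ∂(Measure.pi (fun _ : Fin n => truncExp ν)) := by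
  have hmp := measurePreserving_piFinSuccAbove (fun _ : Fin (n+1) => truncExp ν) 0
  set e := MeasurableEquiv.piFinSuccAbove (fun _ : Fin (n+1) => ℝ) 0 with he
  set F := (Efun γ ρ (n+1) k).indicator
      (fun t => ENNReal.ofReal (Real.exp (-(c * ∑ i : Fin (n+1), t i)))) with hF
  have hFm : Measurable F := Fmeas γ ρ (n+1) k c
  have h1 : Jfun ν γ ρ (n+1) k c = ∫⁻ p, F (e.symm p)
      ∂((truncExp ν).prod (Measure.pi (fun _ : Fin n => truncExp ν))) := by
    rw [Jfun]
    rw [hmp.lintegral_map_equiv (fun p => F (e.symm p)) e]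
    apply lintegral_congr
    intro t
    congr 1
    exact (e.symm_apply_apply t).symm
  rw [h1, lintegral_prod_symm (fun p => F (e.symm p))
    ((hFm.comp e.symm.measurable).aemeasurable)]
  apply lintegral_congr; intro y
  apply lintegral_congr; intro x
  congr 1


lemma insertNth_succ (n : ℕ) (x : ℝ) (y : Fin n → ℝ) (i : Fin n) :
    Fin.insertNth (α := fun _ => ℝ) 0 x y i.succ = y i := by
  rw [Fin.insertNth_zero', Fin.cons_succ]

lemma sum_insertNth (n : ℕ) (x : ℝ) (y : Fin n → ℝ) :
    ∑ i : Fin (n+1), Fin.insertNth 0 x y i = x + ∑ i : Fin n, y i := by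
  rw [Fin.sum_univ_succ, Fin.insertNth_apply_same]
  simp only [insertNth_succ]

lemma csum_zero (n : ℕ) (x : ℝ) (y : Fin n → ℝ) :
    ∑ i : Fin (n+1), (if (0 : Fin (n+1)) < i then Fin.insertNth 0 x y i else 0)
      = ∑ i : Fin n, y i := by
  rw [Fin.sum_univ_succ]
  simp only [lt_irrefl, if_false, Fin.succ_pos, if_true, zero_add]
  exact Finset.sum_congr rfl (fun i _ => insertNth_succ n x y i)

lemma csum_succ (n : ℕ) (x : ℝ) (y : Fin n → ℝ) (j : Fin n) :
    ∑ i : Fin (n+1), (if j.succ < i then Fin.insertNth 0 x y i else 0)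
      = ∑ i : Fin n, (if j < i then y i else 0) := by
  rw [Fin.sum_univ_succ]
  simp only [Fin.not_lt_zero, if_false, zero_add, Fin.succ_lt_succ_iff]
  exact Finset.sum_congr rfl (fun i _ => by rw [insertNth_succ n x y i])

lemma mem_E_insertNth (γ ρ : ℝ) (n k : ℕ) (x : ℝ) (y : Fin n → ℝ) :
    Fin.insertNth 0 x y ∈ Efun γ ρ (n+1) (k+1) ↔
      (γ * (ρ⁻¹ + ∑ i : Fin n, y i) ≤ x ∧ y ∈ Efun γ ρ n k) := by
  simp only [Efun, mem_setOf_eq]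
  rw [Fin.forall_fin_succ]
  constructor
  · rintro ⟨h0, hs⟩
    refine ⟨?_, ?_⟩
    · have := h0 (by simp)
      rwa [Fin.insertNth_apply_same, csum_zero] at this
    · intro j hj
      have := hs j (by simpa [Fin.val_succ] using Nat.succ_lt_succ hj)
      rwa [insertNth_succ, csum_succ] at this
  · rintro ⟨h0, hs⟩
    refine ⟨fun _ => ?_, fun j hj => ?_⟩
    · rwa [Fin.insertNth_apply_same, csum_zero]
    · rw [insertNth_succ, csum_succ]
      exact hs j (by simpa [Fin.val_succ] using hj)

lemma Jsucc (ν γ ρ : ℝ) (hν : 0 ≤ ν) (hγ : 1 ≤ γ) (hρ : 0 < ρ) (hνγ : ν ≤ γ / ρ)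
    (n k : ℕ) (c : ℝ) (hc : 0 ≤ c) :
    Jfun ν γ ρ (n+1) (k+1) c =
      ENNReal.ofReal (Real.exp (ν - (1+c) * (γ * ρ⁻¹)) / (1+c))
        * Jfun ν γ ρ n k ((1+c)*(1+γ) - 1) := by
  classical
  have hγ0 : (0:ℝ) < γ := by linarith
  have hc1 : (0:ℝ) < 1 + c := by linarith
  set c' : ℝ := (1+c)*(1+γ) - 1 with hc'
  set K : ℝ≥0∞ := ENNReal.ofReal (Real.exp (ν - (1+c) * (γ * ρ⁻¹)) / (1+c)) with hK
  rw [Jpeel]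
  have hstep : ∀ y : Fin n → ℝ, (∀ i, ν ≤ y i) →
      (∫⁻ x, (Efun γ ρ (n+1) (k+1)).indicator
          (fun t => ENNReal.ofReal (Real.exp (-(c * ∑ i : Fin (n+1), t i))))
          (Fin.insertNth 0 x y) ∂(truncExp ν))
        = K * (Efun γ ρ n k).indicator
            (fun y => ENNReal.ofReal (Real.exp (-(c' * ∑ i : Fin n, y i)))) y := by
    intro y hy
    have hSy : 0 ≤ ∑ i : Fin n, y i := Finset.sum_nonneg fun i _ => le_trans hν (hy i)
    set S := ∑ i : Fin n, y i with hS
    set L : ℝ := γ * (ρ⁻¹ + S) with hL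
    have hLν : ν ≤ L := by
      have h1 : γ * ρ⁻¹ ≤ L := by nlinarith
      have h2 : ν ≤ γ * ρ⁻¹ := by rwa [div_eq_mul_inv] at hνγ
      linarith
    have hpt : ∀ x : ℝ, (Efun γ ρ (n+1) (k+1)).indicator
        (fun t => ENNReal.ofReal (Real.exp (-(c * ∑ i : Fin (n+1), t i))))
        (Fin.insertNth 0 x y)
        = (if L ≤ x then ENNReal.ofReal (Real.exp (-(c * x))) else 0)
          * (Efun γ ρ n k).indicator
              (fun y => ENNReal.ofReal (Real.exp (-(c * ∑ i : Fin n, y i)))) y := by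
      intro x
      rw [indicator_apply, indicator_apply]
      by_cases h1 : L ≤ x
      · by_cases h2 : y ∈ Efun γ ρ n k
        · rw [if_pos ((mem_E_insertNth γ ρ n k x y).mpr ⟨h1, h2⟩), if_pos h1, if_pos h2,
            sum_insertNth, ← ENNReal.ofReal_mul (Real.exp_nonneg _), ← Real.exp_add]
          congr 2
          ring
        · rw [if_neg (fun hmem => h2 ((mem_E_insertNth γ ρ n k x y).mp hmem).2),
            if_neg h2, mul_zero]
      · rw [if_neg (fun hmem => h1 ((mem_E_insertNth γ ρ n k x y).mp hmem).1),
          if_neg h1, zero_mul]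
    rw [lintegral_congr hpt]
    rw [lintegral_mul_const _ (Measurable.ite measurableSet_Ici (by fun_prop) measurable_const)]
    rw [inner_int ν c L hc hLν]
    rw [indicator_apply, indicator_apply]
    by_cases h2 : y ∈ Efun γ ρ n k
    · rw [if_pos h2, if_pos h2, hK, ← ENNReal.ofReal_mul (div_nonneg (Real.exp_nonneg _) hc1.le),
        ← ENNReal.ofReal_mul (div_nonneg (Real.exp_nonneg _) hc1.le),
        div_mul_eq_mul_div, div_mul_eq_mul_div, ← Real.exp_add, ← Real.exp_add]
      congr 2
      rw [hL, hc', hS]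
      ring
    · rw [if_neg h2, if_neg h2, mul_zero, mul_zero]
  rw [lintegral_congr_ae ((ae_pi_ge ν n).mono (fun y hy => hstep y hy))]
  rw [lintegral_const_mul K (Fmeas γ ρ n k c')]
  rfl

lemma Efun_zero (γ ρ : ℝ) (n : ℕ) : Efun γ ρ n 0 = univ := by
  ext t; simp [Efun]

lemma Jzero (ν γ ρ : ℝ) (hν : 0 ≤ ν) (n : ℕ) (c : ℝ) (hc : 0 ≤ c) :
    Jfun ν γ ρ n 0 c = ENNReal.ofReal ((Real.exp (-(c*ν)) / (1+c))^n) := by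
  have hc1 : (0:ℝ) < 1 + c := by linarith
  induction n with
  | zero =>
    rw [Jfun, Efun_zero]
    simp only [indicator_univ, Finset.univ_eq_empty, Finset.sum_empty, mul_zero, neg_zero,
      Real.exp_zero, ENNReal.ofReal_one, pow_zero, lintegral_const, one_mul]
    exact measure_univ

  | succ n ih =>
    rw [Jpeel]
    have hstep : ∀ y : Fin n → ℝ,
        (∫⁻ x, (Efun γ ρ (n+1) 0).indicator
            (fun t => ENNReal.ofReal (Real.exp (-(c * ∑ i : Fin (n+1), t i))))
            (Fin.insertNth 0 x y) ∂(truncExp ν))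
          = ENNReal.ofReal (Real.exp (-(c*ν)) / (1+c))
            * (Efun γ ρ n 0).indicator
                (fun y => ENNReal.ofReal (Real.exp (-(c * ∑ i : Fin n, y i)))) y := by
      intro y
      rw [Efun_zero, Efun_zero]
      simp only [indicator_univ]
      have hpt : ∀ᵐ x ∂(truncExp ν), ENNReal.ofReal (Real.exp (-(c * ∑ i : Fin (n+1), Fin.insertNth 0 x y i)))
          = (if ν ≤ x then ENNReal.ofReal (Real.exp (-(c * x))) else 0)
            * ENNReal.ofReal (Real.exp (-(c * ∑ i : Fin n, y i))) := by
        filter_upwards [ae_trunc_ge ν] with x hx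
        rw [if_pos hx, sum_insertNth, ← ENNReal.ofReal_mul (Real.exp_nonneg _), ← Real.exp_add]
        congr 2
        ring
      rw [lintegral_congr_ae hpt,
        lintegral_mul_const _ (Measurable.ite measurableSet_Ici (by fun_prop) measurable_const),
        inner_int ν c ν hc le_rfl]
      congr 2
      ring_nf
    rw [lintegral_congr (fun y => hstep y),
      lintegral_const_mul _ (Fmeas γ ρ n 0 c), ← Jfun, ih]
    rw [← ENNReal.ofReal_mul (div_nonneg (Real.exp_nonneg _) hc1.le), pow_succ]
    congr 1
    ring

lemma Jclosed (ν γ ρ : ℝ) (hν : 0 ≤ ν) (hγ : 1 ≤ γ) (hρ : 0 < ρ) (hνγ : ν ≤ γ / ρ) :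
    ∀ (k m : ℕ) (c : ℝ), 0 ≤ c →
    Jfun ν γ ρ (k+m) k c = ENNReal.ofReal (
      Real.exp ((k:ℝ)*ν - γ*ρ⁻¹*(1+c)*(∑ i ∈ Finset.range k, (1+γ)^i)
          - ((1+c)*(1+γ)^k - 1)*ν*(m:ℝ))
      / ((1+c)^k * (1+γ)^(∑ i ∈ Finset.range k, i) * ((1+c)*(1+γ)^k)^m)) := by
  intro k
  induction k with
  | zero =>
    intro m c hc
    rw [zero_add, Jzero ν γ ρ hν m c hc]
    congr 1
    rw [div_pow, ← Real.exp_nat_mul]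
    simp only [Finset.range_zero, Finset.sum_empty, pow_zero, Nat.cast_zero]
    rw [show (m:ℝ) * (-(c*ν)) = 0*ν - γ*ρ⁻¹*(1+c)*0 - ((1+c)*1 - 1)*ν*(m:ℝ) by ring]
    congr 1
    ring
  | succ k ih =>
    intro m c hc
    have h1γ : (0:ℝ) < 1 + γ := by linarith
    have hc1 : (0:ℝ) < 1 + c := by linarith
    have hidx : k + 1 + m = (k + m) + 1 := by omega
    rw [hidx, Jsucc ν γ ρ hν hγ hρ hνγ (k+m) k c hc]
    have hc' : (0:ℝ) ≤ (1+c)*(1+γ) - 1 := by nlinarith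
    rw [ih m _ hc']
    rw [← ENNReal.ofReal_mul (div_nonneg (Real.exp_nonneg _) hc1.le)]
    congr 1
    rw [div_mul_div_comm, ← Real.exp_add]
    have hexp : (ν - (1+c) * (γ * ρ⁻¹)) +
        ((k:ℝ)*ν - γ*ρ⁻¹*(1+((1+c)*(1+γ)-1))*(∑ i ∈ Finset.range k, (1+γ)^i)
          - ((1+((1+c)*(1+γ)-1))*(1+γ)^k - 1)*ν*(m:ℝ))
        = ((k+1:ℕ):ℝ)*ν - γ*ρ⁻¹*(1+c)*(∑ i ∈ Finset.range (k+1), (1+γ)^i)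
          - ((1+c)*(1+γ)^(k+1) - 1)*ν*(m:ℝ) := by
      rw [geom_sum_succ, pow_succ,
        show (1+((1+c)*(1+γ)-1)) = (1+c)*(1+γ) by ring]
      push_cast
      ring
    have hden : (1+c) * ((1+((1+c)*(1+γ)-1))^k * (1+γ)^(∑ i ∈ Finset.range k, i)
          * ((1+((1+c)*(1+γ)-1))*(1+γ)^k)^m)
        = (1+c)^(k+1) * (1+γ)^(∑ i ∈ Finset.range (k+1), i) * ((1+c)*(1+γ)^(k+1))^m := by
      rw [Finset.sum_range_succ, pow_add, pow_add, pow_succ,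
        show (1+((1+c)*(1+γ)-1)) = (1+c)*(1+γ) by ring, mul_pow]
      ring
    rw [hexp, hden]

/-- Theorem 1 (joint decoding probability θ_{r,k}): for i.i.d. truncated-exponential
t₁,…,t_r with threshold ν, γ ≥ 1, ρ > 0, ν ≤ γ/ρ, the probability that
t_j ≥ γ(ρ⁻¹ + Σ_{i>j} t_i) for all j = 1,…,k equals
exp(rν − (r−k)ν(1+γ)^k − ρ⁻¹((1+γ)^k − 1)) / (1+γ)^(rk − k(k+1)/2). -/
theorem stmt_2 (r k : ℕ) (hk : 1 ≤ k) (hkr : k ≤ r) (ν γ ρ : ℝ)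
    (hν : 0 ≤ ν) (hγ : 1 ≤ γ) (hρ : 0 < ρ) (hνγ : ν ≤ γ / ρ) :
    (Measure.pi (fun _ : Fin r => truncExp ν))
      {t | ∀ j : Fin r, (j : ℕ) < k →
        t j ≥ γ * (ρ⁻¹ + ∑ i : Fin r, if j < i then t i else 0)} =
    ENNReal.ofReal
      (Real.exp ((r : ℝ) * ν - ((r : ℝ) - (k : ℝ)) * ν * (1 + γ) ^ k
          - ρ⁻¹ * ((1 + γ) ^ k - 1)) /
        (1 + γ) ^ (r * k - k * (k + 1) / 2)) := by
  have h1γ : (0:ℝ) < 1 + γ := by linarith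
  have hLJ : (Measure.pi (fun _ : Fin r => truncExp ν))
      {t | ∀ j : Fin r, (j : ℕ) < k →
        t j ≥ γ * (ρ⁻¹ + ∑ i : Fin r, if j < i then t i else 0)}
      = Jfun ν γ ρ r k 0 := by
    rw [show ({t | ∀ j : Fin r, (j : ℕ) < k →
        t j ≥ γ * (ρ⁻¹ + ∑ i : Fin r, if j < i then t i else 0)} : Set (Fin r → ℝ))
        = Efun γ ρ r k from rfl,
      ← lintegral_indicator_one (Emeas γ ρ r k), Jfun]
    apply lintegral_congr
    intro t
    by_cases ht : t ∈ Efun γ ρ r k <;> simp [ht]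
  rw [hLJ]
  have hidx : k + (r - k) = r := by omega
  have hJ := Jclosed ν γ ρ hν hγ hρ hνγ k (r-k) 0 le_rfl
  rw [hidx] at hJ
  rw [hJ]
  congr 1
  -- real number identity
  have hgs := geom_sum_mul (1+γ) k
  rw [add_sub_cancel_left] at hgs
  -- nat exponent identity
  have hs2 := Finset.sum_range_id_mul_two k
  have hq2 : (k*(k+1)/2) * 2 = k*(k+1) := Nat.div_mul_cancel (Nat.even_mul_succ_self k).two_dvd
  have hkk : k*(k+1) ≤ r*k*2 := by nlinarith
  have hle : k*(k+1)/2 ≤ r*k := by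
    have h2 : (k*(k+1)/2) * 2 ≤ r*k*2 := by rw [hq2]; exact hkk
    exact Nat.le_of_mul_le_mul_right h2 (by norm_num)
  have hnat : (∑ i ∈ Finset.range k, i) + k*(r-k) = r*k - k*(k+1)/2 := by
    zify [hkr, hle]
    zify [hk] at hs2
    zify at hq2
    linarith
  have hden : ((1:ℝ)+0)^k * (1+γ)^(∑ i ∈ Finset.range k, i) * (((1:ℝ)+0)*(1+γ)^k)^(r-k)
      = (1+γ)^(r*k - k*(k+1)/2) := by
    rw [← hnat, pow_add, pow_mul]
    norm_num
  rw [hden]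
  congr 2
  rw [Nat.cast_sub hkr]
  linear_combination (-ρ⁻¹) * hgs
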